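/- For every integer n ≥ 3, the distance matrix D(T_n) is invertible, and its inverse M is the real n×n matrix with entries: M_{11} = M_{22} = -(n-2)/2; M_{12} = M_{21} = 1 - (n-2)/2; M_{ij} = 1/2 whenever exactly one of i, j lies in {1,2}; M_{ii} = -1/2 for every i in {3,...,n}; and M_{ij} = 0 for all distinct i, j in {3,...,n}. -/

import Mathlib

/-- For every integer `n ≥ 3`, the distance matrix `D(T_n)` is invertible and its
inverse is the explicitly given matrix `M`. Vertices are `Fin n` (0-based); the base
vertices are those with index `< 2`. -/
theorem inv_distanceMatrix_Tn (n : ℕ) (hn : 3 ≤ n)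
    (D M : Matrix (Fin n) (Fin n) ℝ)
    (hD : ∀ i j : Fin n, D i j =
      if i = j then 0 else if 2 ≤ i.val ∧ 2 ≤ j.val then 2 else 1)
    (hM : ∀ i j : Fin n, M i j =
      if i.val < 2 ∧ j.val < 2 then
        (if i = j then -((n : ℝ) - 2) / 2 else 1 - ((n : ℝ) - 2) / 2)
      else if i.val < 2 ∨ j.val < 2 then 1 / 2
      else if i = j then -(1 / 2) else 0) :
    IsUnit D ∧ D⁻¹ = M := by
  have h0 : 0 < n := by omega
  have h1 : 1 < n := by omega
  set e0 : Fin n := ⟨0, h0⟩ with he0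
  set e1 : Fin n := ⟨1, h1⟩ with he1
  have hv0 : e0.val = 0 := rfl
  have hv1 : e1.val = 1 := rfl
  set S : Finset (Fin n) := Finset.univ.filter (fun k => 2 ≤ k.val) with hSdef
  have hmemS : ∀ k : Fin n, k ∈ S ↔ 2 ≤ k.val := by
    intro k; simp [hSdef]
  have he1S : e1 ∉ S := by rw [hmemS]; omega
  have he0S : e0 ∉ insert e1 S := by
    rw [Finset.mem_insert, hmemS]
    push_neg
    constructor
    · intro h; have := congrArg Fin.val h; omega
    · omega
  have huniv : (Finset.univ : Finset (Fin n)) = insert e0 (insert e1 S) := by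
    ext k
    simp only [Finset.mem_univ, Finset.mem_insert, hmemS, true_iff, Fin.ext_iff, hv0, hv1]
    omega
  have hsplit : ∀ f : Fin n → ℝ, ∑ k, f k = f e0 + f e1 + ∑ k ∈ S, f k := by
    intro f
    rw [huniv, Finset.sum_insert he0S, Finset.sum_insert he1S]
    ring
  have hc : n = S.card + 2 := by
    have h := congrArg Finset.card huniv
    rw [Finset.card_univ, Fintype.card_fin, Finset.card_insert_of_notMem he0S,
      Finset.card_insert_of_notMem he1S] at h
    omega
  have hcardR : (S.card : ℝ) = (n : ℝ) - 2 := by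
    have : (n : ℝ) = (S.card : ℝ) + 2 := by exact_mod_cast congrArg (Nat.cast : ℕ → ℝ) hc
    linarith
  have hDM : D * M = 1 := by
    ext i j
    rw [Matrix.mul_apply, hsplit, Matrix.one_apply]
    rcases lt_or_ge i.val 2 with hi | hi
    · have hi' : i = e0 ∨ i = e1 := by
        have : i.val = 0 ∨ i.val = 1 := by omega
        rcases this with h | h
        · left; exact Fin.ext h
        · right; exact Fin.ext h
      rcases lt_or_ge j.val 2 with hj | hj
      · -- Case A : both base vertices
        have hj' : j = e0 ∨ j = e1 := by
          have : j.val = 0 ∨ j.val = 1 := by omega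
          rcases this with h | h
          · left; exact Fin.ext h
          · right; exact Fin.ext h
        have hsum : ∑ k ∈ S, D i k * M k j = ((n : ℝ) - 2) / 2 := by
          have hterm : ∀ k ∈ S, D i k * M k j = 1 / 2 := by
            intro k hk
            rw [hmemS] at hk
            have hik : ¬ i = k := by
              intro h; rw [h] at hi; omega
            rw [hD, hM]
            rw [if_neg hik, if_neg (by omega : ¬ (2 ≤ i.val ∧ 2 ≤ k.val)),
              if_neg (by omega : ¬ (k.val < 2 ∧ j.val < 2)),
              if_pos (Or.inr hj : k.val < 2 ∨ j.val < 2)]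
            ring
          rw [Finset.sum_congr rfl hterm, Finset.sum_const, nsmul_eq_mul, hcardR]
          ring
        rcases hi' with rfl | rfl <;> rcases hj' with rfl | rfl <;> rw [hsum] <;>
          simp [hD, hM, he0, he1, Fin.ext_iff] <;> ring
      · -- Case B : i base, j non-base
        have hij : ¬ i = j := by intro h; rw [h] at hi; omega
        have hjS : j ∈ S := (hmemS j).mpr hj
        have hsum : ∑ k ∈ S, D i k * M k j = -(1 / 2) := by
          have hterm : ∀ k ∈ S, D i k * M k j = if k = j then -(1 / 2) else 0 := by
            intro k hk
            rw [hmemS] at hk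
            have hik : ¬ i = k := by intro h; rw [h] at hi; omega
            rw [hD, hM]
            rw [if_neg hik, if_neg (by omega : ¬ (2 ≤ i.val ∧ 2 ≤ k.val)),
              if_neg (by omega : ¬ (k.val < 2 ∧ j.val < 2)),
              if_neg (by omega : ¬ (k.val < 2 ∨ j.val < 2))]
            split_ifs <;> ring
          rw [Finset.sum_congr rfl hterm, Finset.sum_ite_eq' S j (fun _ => -(1 / 2)),
            if_pos hjS]
        rcases hi' with rfl | rfl <;> rw [hsum] <;>
          simp [hD, hM, hij, he0, he1, Fin.ext_iff,
            show ¬ (j : Fin n).val < 2 by omega,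
            show ¬ 0 = (j : Fin n).val by omega, show ¬ 1 = (j : Fin n).val by omega]
    · have hiS : i ∈ S := (hmemS i).mpr hi
      rcases lt_or_ge j.val 2 with hj | hj
      · -- Case C : i non-base, j base
        have hij : ¬ i = j := by intro h; rw [h] at hi; omega
        have hj' : j = e0 ∨ j = e1 := by
          have : j.val = 0 ∨ j.val = 1 := by omega
          rcases this with h | h
          · left; exact Fin.ext h
          · right; exact Fin.ext h
        have hsum : ∑ k ∈ S, D i k * M k j = (n : ℝ) - 3 := by
          have hterm : ∀ k ∈ S, D i k * M k j = 1 - (if i = k then (1:ℝ) else 0) := by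
            intro k hk
            rw [hmemS] at hk
            rw [hD, hM]
            rw [if_neg (by omega : ¬ (k.val < 2 ∧ j.val < 2)),
              if_pos (Or.inr hj : k.val < 2 ∨ j.val < 2)]
            by_cases hik : i = k
            · rw [if_pos hik, if_pos hik]; ring
            · rw [if_neg hik, if_neg hik, if_pos (⟨hi, hk⟩ : 2 ≤ i.val ∧ 2 ≤ k.val)]
              ring
          rw [Finset.sum_congr rfl hterm, Finset.sum_sub_distrib, Finset.sum_const,
            Finset.sum_ite_eq S i (fun _ => (1:ℝ)), if_pos hiS, nsmul_eq_mul, mul_one,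
            hcardR]
          ring
        rcases hj' with rfl | rfl <;> rw [hsum] <;>
          simp [hD, hM, hij, he0, he1, Fin.ext_iff,
            show ¬ (i : Fin n).val < 2 by omega,
            show ¬ (i : Fin n).val = 0 by omega,
            show ¬ (i : Fin n).val = 1 by omega] <;> ring
      · -- Case D : both non-base
        have hjS : j ∈ S := (hmemS j).mpr hj
        have hsum : ∑ k ∈ S, D i k * M k j = if i = j then 0 else -1 := by
          have hterm : ∀ k ∈ S, D i k * M k j
              = if k = j then (if i = j then (0:ℝ) else -1) else 0 := by
            intro k hk
            rw [hmemS] at hk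
            rw [hD, hM]
            rw [if_neg (by omega : ¬ (k.val < 2 ∧ j.val < 2)),
              if_neg (by omega : ¬ (k.val < 2 ∨ j.val < 2))]
            by_cases hkj : k = j
            · subst hkj
              rw [if_pos rfl, if_pos rfl]
              by_cases hik : i = k
              · rw [if_pos hik, if_pos hik]; ring
              · rw [if_neg hik, if_neg hik, if_pos (⟨hi, hk⟩ : 2 ≤ i.val ∧ 2 ≤ k.val)]
                ring
            · rw [if_neg hkj, if_neg hkj, mul_zero]
          rw [Finset.sum_congr rfl hterm,
            Finset.sum_ite_eq' S j (fun _ => if i = j then (0:ℝ) else -1), if_pos hjS]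
        have hie0 : ¬ i = e0 := by intro h; rw [h] at hi; omega
        have hie1 : ¬ i = e1 := by intro h; rw [h] at hi; omega
        rw [hsum, hD, hD, hM, hM]
        rw [if_neg hie0, if_neg hie1,
          if_neg (by omega : ¬ (2 ≤ i.val ∧ 2 ≤ e0.val)),
          if_neg (by omega : ¬ (2 ≤ i.val ∧ 2 ≤ e1.val)),
          if_neg (by omega : ¬ (e0.val < 2 ∧ j.val < 2)),
          if_pos (Or.inl (by omega) : e0.val < 2 ∨ j.val < 2),
          if_neg (by omega : ¬ (e1.val < 2 ∧ j.val < 2)),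
          if_pos (Or.inl (by omega) : e1.val < 2 ∨ j.val < 2)]
        by_cases hij : i = j
        · rw [if_pos hij, if_pos hij]; ring
        · rw [if_neg hij, if_neg hij]; ring
  have hMD : M * D = 1 := mul_eq_one_comm.mp hDM
  exact ⟨⟨⟨D, M, hDM, hMD⟩, rfl⟩, Matrix.inv_eq_right_inv hDM⟩
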